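/- If (z_n) is a sequence in (0, ρ) such that z_n * F′(z_n) / F(z_n) = n for every n ≥ 1, then n * (1 − z_n/ρ) → α as n → ∞. (Consequently the tuning parameter for target expected size n satisfies z*(n) ∼ ρ(1 − α/n) for rational specifications.) -/

import Mathlib

/-- For a rational specification with singular form `F(z) = β(z)(1 − z/ρ)^{−α}`,
the tuning parameter `z_n` achieving expected size `n` satisfies
`n (1 − z_n/ρ) → α`, i.e. `z*(n) ∼ ρ(1 − α/n)`. -/
theorem rational_tuning_asymptotics
    (ρ α : ℝ) (hρ : 0 < ρ) (hα : 0 < α)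
    (β : ℝ → ℝ) (U : Set ℝ) (hU : IsOpen U) (hUρ : Set.Icc 0 ρ ⊆ U)
    (hβ : ContDiffOn ℝ 1 β U) (hβpos : ∀ z ∈ U, 0 < β z)
    (F : ℝ → ℝ) (hF : ∀ z, F z = β z * (1 - z / ρ) ^ (-α))
    (z : ℕ → ℝ)
    (hzmem : ∀ n : ℕ, 1 ≤ n → z n ∈ Set.Ioo 0 ρ)
    (htune : ∀ n : ℕ, 1 ≤ n → z n * deriv F (z n) / F (z n) = n) :
    Filter.Tendsto (fun n : ℕ => (n : ℝ) * (1 - z n / ρ))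
      Filter.atTop (nhds α) := by
  set g : ℝ → ℝ := fun x => x * deriv β x / β x with hg
  have hβdiff : ∀ x ∈ U, DifferentiableAt ℝ β x := fun x hx =>
    (hβ.differentiableOn one_ne_zero).differentiableAt (hU.mem_nhds hx)
  have hderivcont : ContinuousOn (deriv β) U :=
    hβ.continuousOn_deriv_of_isOpen hU le_rfl
  have hgcont : ContinuousOn g (Set.Icc 0 ρ) := by
    apply ContinuousOn.div
    · exact continuousOn_id.mul (hderivcont.mono hUρ)
    · exact hβ.continuousOn.mono hUρ
    · exact fun x hx => (hβpos x (hUρ hx)).ne'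
  obtain ⟨M, hM⟩ := isCompact_Icc.exists_bound_of_continuousOn hgcont
  have hM0 : 0 ≤ M := le_trans (norm_nonneg _) (hM 0 ⟨le_rfl, hρ.le⟩)
  -- key identity
  have key : ∀ n : ℕ, 1 ≤ n →
      (n : ℝ) * (1 - z n / ρ) = g (z n) * (1 - z n / ρ) + α * (z n / ρ) := by
    intro n hn
    obtain ⟨hz0, hzρ⟩ := hzmem n hn
    have hzU : z n ∈ U := hUρ ⟨hz0.le, hzρ.le⟩
    set t := 1 - z n / ρ with ht_def
    have ht : 0 < t := by
      rw [ht_def]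
      have : z n / ρ < 1 := (div_lt_one hρ).2 hzρ
      linarith
    have h1 : HasDerivAt (fun x : ℝ => 1 - x / ρ) (-(1/ρ)) (z n) := by
      simpa using ((hasDerivAt_id (z n)).div_const ρ).const_sub 1
    have h2 : HasDerivAt (fun x : ℝ => (1 - x/ρ) ^ (-α))
        ((-α) * t ^ (-α - 1) * (-(1/ρ))) (z n) := by
      have := (Real.hasDerivAt_rpow_const (x := t) (p := -α) (Or.inl ht.ne')).comp
        (z n) h1
      exact this.congr_deriv (by ring)
    have h3 : HasDerivAt F
        (deriv β (z n) * t ^ (-α) + β (z n) * ((-α) * t ^ (-α - 1) * (-(1/ρ)))) (z n) := by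
      have hFe : F = fun x => β x * (1 - x / ρ) ^ (-α) := funext hF
      rw [hFe]
      exact ((hβdiff _ hzU).hasDerivAt).mul h2
    have hdF : deriv F (z n)
        = deriv β (z n) * t ^ (-α) + β (z n) * ((-α) * t ^ (-α - 1) * (-(1/ρ))) :=
      h3.deriv
    have hβne : β (z n) ≠ 0 := (hβpos _ hzU).ne'
    have hsplit : t ^ (-α - 1) = t ^ (-α) * t⁻¹ := by
      rw [show -α - 1 = -α + (-1) by ring, Real.rpow_add ht, Real.rpow_neg_one]
    have e1 : z n * deriv F (z n) / F (z n)
        = z n * deriv β (z n) / β (z n) + α * (z n / ρ) * t⁻¹ := by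
      rw [hF, hdF, ← ht_def, hsplit]
      have hrpne : t ^ (-α) ≠ 0 := (Real.rpow_pos_of_pos ht _).ne'
      generalize hT : t ^ (-α) = T at hrpne ⊢
      field_simp
    have e2 : g (z n) + α * (z n / ρ) * t⁻¹ = (n : ℝ) := by
      rw [hg]
      dsimp only
      rw [← e1]
      exact htune n hn
    rw [← e2, add_mul, mul_assoc, inv_mul_cancel₀ ht.ne', mul_one]
  -- the limit
  rw [tendsto_iff_dist_tendsto_zero]
  apply squeeze_zero' (g := fun n : ℕ => (M + α) * α / ((n : ℝ) - M))
  · exact Filter.Eventually.of_forall fun n => dist_nonneg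
  · filter_upwards [Filter.eventually_ge_atTop (⌈M⌉₊ + 1)] with n hn
    have hn1 : 1 ≤ n := le_trans (Nat.le_add_left 1 ⌈M⌉₊) hn
    have hnM : M < (n : ℝ) := by
      calc M ≤ (⌈M⌉₊ : ℝ) := Nat.le_ceil M
        _ < (n : ℝ) := by exact_mod_cast Nat.lt_of_lt_of_le (Nat.lt_succ_self _) hn
    obtain ⟨hz0, hzρ⟩ := hzmem n hn1
    have hgle : |g (z n)| ≤ M := by simpa using hM (z n) ⟨hz0.le, hzρ.le⟩
    set ε := 1 - z n / ρ with hε_def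
    have hzρ1 : z n / ρ < 1 := (div_lt_one hρ).2 hzρ
    have hzρ0 : 0 < z n / ρ := div_pos hz0 hρ
    have hε0 : 0 < ε := by simp only [hε_def]; linarith
    have hkey := key n hn1
    -- (n - g) * ε = α * (z n / ρ)
    have h4 : ((n : ℝ) - g (z n)) * ε = α * (z n / ρ) := by
      rw [sub_mul]; linarith [hkey]
    have hεle : ε ≤ α / ((n : ℝ) - M) := by
      rw [le_div_iff₀ (by linarith)]
      calc ε * ((n : ℝ) - M) ≤ ε * ((n : ℝ) - g (z n)) := by
            have := (abs_le.1 hgle).2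
            nlinarith
        _ = α * (z n / ρ) := by rw [mul_comm]; exact h4
        _ ≤ α * 1 := by nlinarith
        _ = α := mul_one α
    have habs : |(n : ℝ) * ε - α| ≤ (M + α) * ε := by
      have heq : (n : ℝ) * ε - α = (g (z n) - α) * ε := by
        have : α * (z n / ρ) - α = -(α * ε) := by
          simp only [hε_def]; ring
        rw [hkey]; rw [sub_mul]; linarith
      rw [heq, abs_mul, abs_of_pos hε0]
      have : |g (z n) - α| ≤ M + α := by
        have := abs_le.1 hgle
        rw [abs_le]; constructor <;> linarith
      nlinarith
    calc dist ((n : ℝ) * ε) α = |(n : ℝ) * ε - α| := Real.dist_eq _ _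
      _ ≤ (M + α) * ε := habs
      _ ≤ (M + α) * (α / ((n : ℝ) - M)) := by
          apply mul_le_mul_of_nonneg_left hεle (by linarith)
      _ = (M + α) * α / ((n : ℝ) - M) := by ring
  · have h5 : Filter.Tendsto (fun n : ℕ => (n : ℝ) - M) Filter.atTop Filter.atTop :=
      Filter.tendsto_atTop_add_const_right _ (-M) tendsto_natCast_atTop_atTop
    have h6 : Filter.Tendsto (fun n : ℕ => ((n : ℝ) - M)⁻¹) Filter.atTop (nhds 0) :=
      h5.inv_tendsto_atTop
    have := h6.const_mul ((M + α) * α)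
    simpa [div_eq_mul_inv] using this
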